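/- With ACT_k defined as the capacity-constrained relaxation restricted to the top-k smallest-cost columns per row, one has ACT_k(p,q) ≤ ICT(p,q) for every k, and ACT_{h_q}(p,q) = ICT(p,q). -/
import Mathlib


/-- ACT_k is a lower bound on ICT for every `k`, and ACT with `k = h_q` equals ICT. -/
theorem stmt_9 (hp hq : ℕ) (p : Fin (hp + 1) → ℝ) (q : Fin (hq + 1) → ℝ)
    (hpnn : ∀ i, 0 ≤ p i) (hqnn : ∀ j, 0 ≤ q j)
    (hpsum : ∑ i, p i = 1) (hqsum : ∑ j, q j = 1)
    (C : Fin (hp + 1) → Fin (hq + 1) → ℝ) (hC : ∀ i j, 0 ≤ C i j)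
    (s : Fin (hp + 1) → Equiv.Perm (Fin (hq + 1)))
    (hsort : ∀ i, ∀ l l' : Fin (hq + 1), l ≤ l' → C i (s i l) ≤ C i (s i l'))
    (act : ℕ → ℝ) (ict : ℝ)
    (hA : ∀ k : ℕ, IsLeast
      {c : ℝ | ∃ F : Fin (hp + 1) → Fin (hq + 1) → ℝ,
        (∀ i j, 0 ≤ F i j) ∧ (∀ i, ∑ j, F i j = p i) ∧
        (∀ i, ∀ l : Fin (hq + 1), (l : ℕ) < k → F i (s i l) ≤ q (s i l)) ∧
        c = ∑ i, ∑ j, F i j * C i j} (act k))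
    (hI : IsLeast
      {c : ℝ | ∃ F : Fin (hp + 1) → Fin (hq + 1) → ℝ,
        (∀ i j, 0 ≤ F i j) ∧ (∀ i, ∑ j, F i j = p i) ∧ (∀ i j, F i j ≤ q j) ∧
        c = ∑ i, ∑ j, F i j * C i j} ict) :
    (∀ k : ℕ, act k ≤ ict) ∧ act (hq + 1) = ict := by
  have hle : ∀ k : ℕ, act k ≤ ict := by
    intro k
    obtain ⟨F, hFnn, hFsum, hFcap, hc⟩ := hI.1
    exact (hA k).2 ⟨F, hFnn, hFsum, fun i l _ => hFcap i (s i l), hc⟩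
  refine ⟨hle, le_antisymm (hle _) ?_⟩
  obtain ⟨F, hFnn, hFsum, hFcap, hc⟩ := (hA (hq + 1)).1
  refine hI.2 ⟨F, hFnn, hFsum, fun i j => ?_, hc⟩
  have := hFcap i ((s i).symm j) ((s i).symm j).isLt
  simpa using this
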